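/- For every t > 0, the quantity x(t) := 2/3 − t/3 + (1/6)√(6·2^{1/3}·((t−1)²t²)^{1/3}·ω + 4(t−1)t + 4) + (1/2)√(8(t−2)²/9 + 8(t−1)/3 − (2/3)·2^{1/3}·((t−1)²t²)^{1/3}·ω − 4(t+1)(2t−1)(t−2)/(9√(3((t−1)²t²)^{1/3}ω/2^{2/3} + (t−1)t + 1))) — interpreted as the relevant real root of the criticality polynomial — satisfies x(t) > 1. More concretely: the polynomial equation in x obtained by substituting y = √((x−1)(t+x−1)/x) into the criticality condition has, for each t > 0, a real solution x with x > 1. -/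

import Mathlib

set_option maxRecDepth 100000 in
set_option maxHeartbeats 2000000 in
/-- For every `t > 0`, the criticality equation
`x² J_f(x,y) + 1 = x² ∂ₓ f^∙(x,y) + ∂_y f^⋄(x,y)` (with
`y = √((x-1)(t+x-1)/x)`, `λ = y/(t+2x+y²-2)`, and `f^∙, f^⋄` given by their
closed forms for the weights `q_n = tλⁿ`) has a real solution `x > 1`. -/
theorem stmt13 :
    ∀ t : ℝ, 0 < t → ∃ x : ℝ, 1 < x ∧
      (let y := Real.sqrt ((x - 1) * (t + x - 1) / x)
       let l := y / (t + 2 * x + y ^ 2 - 2)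
       let F : ℝ → ℝ → ℝ := fun a b =>
         t * (1 - Real.sqrt (1 - 4 * l ^ 2 * a / (1 - l * b) ^ 2)) /
           (2 * a * Real.sqrt (1 - 4 * l ^ 2 * a / (1 - l * b) ^ 2))
       let G : ℝ → ℝ → ℝ := fun a b =>
         t * l / ((1 - l * b) * Real.sqrt (1 - 4 * l ^ 2 * a / (1 - l * b) ^ 2))
       x ^ 2 * (deriv (fun a => F a y) x * deriv (fun b => G x b) y
                - deriv (fun b => F x b) y * deriv (fun a => G a y) x) + 1
         = x ^ 2 * deriv (fun a => F a y) x + deriv (fun b => G x b) y) := by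
  intro t ht
  obtain ⟨x, hx1, hroot⟩ : ∃ x : ℝ, 1 < x ∧
      (x-1)*(t+x-1)*(t+2*x-2) - x*t^2
        + 2*((x-1)*(t+x-1))*Real.sqrt ((x-1)*(t+x-1)) = 0 := by
    set h : ℝ → ℝ := fun x => (x-1)*(t+x-1)*(t+2*x-2) - x*t^2
        + 2*((x-1)*(t+x-1))*Real.sqrt ((x-1)*(t+x-1)) with hh
    have hc : ContinuousOn h (Set.Icc 1 (t+2)) := by
      apply Continuous.continuousOn; fun_prop
    have h1 : h 1 < 0 := by
      simp only [hh]; norm_num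
      nlinarith [Real.sqrt_nonneg ((1:ℝ)-1), ht]
    have h2 : 0 < h (t+2) := by
      simp only [hh]
      nlinarith [Real.sqrt_nonneg ((t+2-1)*(t+(t+2)-1)), ht]
    obtain ⟨x, hx, hx0⟩ := intermediate_value_Ioo (by linarith : (1:ℝ) ≤ t+2) hc ⟨h1, h2⟩
    exact ⟨x, hx.1, hx0⟩
  refine ⟨x, hx1, ?_⟩
  simp only []
  set yv := Real.sqrt ((x - 1) * (t + x - 1) / x) with hyv
  set lv := yv / (t + 2 * x + yv ^ 2 - 2) with hlv
  have hx : 0 < x := lt_trans one_pos hx1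
  have hT : 0 < t + 2*x - 2 := by linarith
  have hPx : (0:ℝ) < (x-1)*(t+x-1)/x := by
    apply div_pos (mul_pos (by linarith) (by linarith)) hx
  have hy : 0 < yv := Real.sqrt_pos.mpr hPx
  have hy2 : yv^2 = (x-1)*(t+x-1)/x := Real.sq_sqrt hPx.le
  have hy2x : yv^2 * x = (x-1)*(t+x-1) := by rw [hy2]; field_simp
  have hw : 0 < t + 2*x + yv^2 - 2 := by nlinarith [sq_nonneg yv]
  have hTne : t + 2*x - 2 ≠ 0 := hT.ne'
  have hwne : t + 2*x + yv^2 - 2 ≠ 0 := hw.ne'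
  have hTne' : t + x*2 - 2 ≠ 0 := by linarith
  have hwne' : t + x*2 + yv^2 - 2 ≠ 0 := by linarith
  have hu : 1 - lv*yv = (t+2*x-2)/(t+2*x+yv^2-2) := by
    rw [hlv]; field_simp; ring
  have hupos : 0 < 1 - lv*yv := by rw [hu]; positivity
  have hune : 1 - lv*yv ≠ 0 := ne_of_gt hupos
  have hs : 1 - 4*lv^2*x/(1-lv*yv)^2 = (t/(t+2*x-2))^2 := by
    rw [hu, hlv]
    field_simp
    linear_combination (-4:ℝ) * hy2x
  have hsqrt : Real.sqrt (1 - 4*lv^2*x/(1-lv*yv)^2) = t/(t+2*x-2) := by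
    rw [hs, Real.sqrt_sq (by positivity)]
  have hsne : 1 - 4*lv^2*x/(1-lv*yv)^2 ≠ 0 := by
    rw [hs]; positivity
  -- inner derivative, a-direction
  have hia : HasDerivAt (fun a : ℝ => 1 - 4*lv^2*a/(1-lv*yv)^2)
      (-(4*lv^2/(1-lv*yv)^2)) x := by
    have h1 : HasDerivAt (fun a : ℝ => 4*lv^2*a) (4*lv^2) x := by
      simpa using (hasDerivAt_id x).const_mul (4*lv^2)
    have h2 := (h1.div_const ((1-lv*yv)^2)).const_sub 1
    convert h2 using 1
  have hqa : HasDerivAt (fun a : ℝ => Real.sqrt (1 - 4*lv^2*a/(1-lv*yv)^2))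
      (-(2*yv^2/(t*(t+2*x-2)))) x := by
    have h := (Real.hasDerivAt_sqrt hsne).comp x hia
    refine h.congr_deriv (Eq.symm ?_)
    rw [hsqrt, hu, hlv]
    field_simp
    ring
  -- inner derivative, b-direction
  have hb0 : HasDerivAt (fun b : ℝ => 1 - lv*b) (-lv) yv := by
    simpa using ((hasDerivAt_id yv).const_mul lv).const_sub 1
  have hb1 : HasDerivAt (fun b : ℝ => (1 - lv*b)^2) (2*(1-lv*yv)*(-lv)) yv := by
    have h := hb0.pow 2
    norm_num at h
    refine h.congr_deriv (Eq.symm ?_)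
    ring
  have hib : HasDerivAt (fun b : ℝ => 1 - 4*lv^2*x/(1-lv*b)^2)
      (-(8*lv^3*x/(1-lv*yv)^3)) yv := by
    have h := ((hasDerivAt_const yv (4*lv^2*x)).div hb1 (pow_ne_zero 2 hune)).const_sub 1
    refine h.congr_deriv (Eq.symm ?_)
    field_simp
    ring
  have hqb : HasDerivAt (fun b : ℝ => Real.sqrt (1 - 4*lv^2*x/(1-lv*b)^2))
      (-(4*yv^3*x/(t*(t+2*x-2)^2))) yv := by
    have h := (Real.hasDerivAt_sqrt hsne).comp yv hib
    refine h.congr_deriv (Eq.symm ?_)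
    rw [hsqrt, hu, hlv]
    field_simp
    ring
  -- the four function derivatives
  have hdne : 2*x*Real.sqrt (1 - 4*lv^2*x/(1-lv*yv)^2) ≠ 0 := by
    rw [hsqrt]; positivity
  have hF1 : HasDerivAt (fun a : ℝ =>
      t * (1 - Real.sqrt (1 - 4*lv^2*a/(1-lv*yv)^2)) /
        (2*a*Real.sqrt (1 - 4*lv^2*a/(1-lv*yv)^2)))
      (((x-1)*(t+x-1)*(t+2*x-2) - (x-1)*t^2)/(x^2*t^2)) x := by
    have hn := (hqa.const_sub 1).const_mul t
    have hd := ((hasDerivAt_id x).const_mul 2).mul hqa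
    have h := hn.div hd hdne
    refine h.congr_deriv (Eq.symm ?_)
    simp only [Pi.mul_apply, id]
    rw [hsqrt]
    field_simp
    linear_combination (-2*(t+2*x-2)) * hy2x
  have hF2 : HasDerivAt (fun b : ℝ =>
      t * (1 - Real.sqrt (1 - 4*lv^2*x/(1-lv*b)^2)) /
        (2*x*Real.sqrt (1 - 4*lv^2*x/(1-lv*b)^2)))
      (2*yv*((x-1)*(t+x-1))/(x*t^2)) yv := by
    have hn := (hqb.const_sub 1).const_mul t
    have hd := hqb.const_mul (2*x)
    have h := hn.div hd hdne
    refine h.congr_deriv (Eq.symm ?_)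
    rw [hsqrt]
    field_simp
    linear_combination (-4*(t+2*x-2)) * hy2x
  have hG1 : HasDerivAt (fun a : ℝ =>
      t * lv / ((1-lv*yv) * Real.sqrt (1 - 4*lv^2*a/(1-lv*yv)^2)))
      (2*yv*((x-1)*(t+x-1))/(x*t^2)) x := by
    have hd := hqa.const_mul (1-lv*yv)
    have hdne' : (1-lv*yv) * Real.sqrt (1 - 4*lv^2*x/(1-lv*yv)^2) ≠ 0 := by
      rw [hsqrt]; positivity
    have h := (hasDerivAt_const x (t*lv)).div hd hdne'
    refine h.congr_deriv (Eq.symm ?_)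
    rw [hsqrt, hu, hlv]
    field_simp
    linear_combination (-2*yv) * hy2x
  have hG2 : HasDerivAt (fun b : ℝ =>
      t * lv / ((1-lv*b) * Real.sqrt (1 - 4*lv^2*x/(1-lv*b)^2)))
      (((x-1)*(t+x-1))*(t+2*x-2)/(x*t^2)) yv := by
    have hd := hb0.mul hqb
    have hdne' : (1-lv*yv) * Real.sqrt (1 - 4*lv^2*x/(1-lv*yv)^2) ≠ 0 := by
      rw [hsqrt]; positivity
    have h := (hasDerivAt_const yv (t*lv)).div hd hdne'
    refine h.congr_deriv (Eq.symm ?_)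
    simp only [Pi.mul_apply]
    rw [hsqrt, hu, hlv]
    field_simp
    linear_combination (-(t^2+4*(x-1)*(t+x-1)+4*x*yv^2)) * hy2x
  rw [hF1.deriv, hF2.deriv, hG1.deriv, hG2.deriv]
  -- key identity from the root equation
  have hPs : Real.sqrt ((x-1)*(t+x-1)) ^ 2 = (x-1)*(t+x-1) :=
    Real.sq_sqrt (by nlinarith)
  have key : ((x-1)*(t+x-1)*(t+2*x-2) - x*t^2)^2 = 4*((x-1)*(t+x-1))^3 := by
    linear_combination ((x-1)*(t+x-1)*(t+2*x-2) - x*t^2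
        - 2*((x-1)*(t+x-1))*Real.sqrt ((x-1)*(t+x-1))) * hroot
      + (4*((x-1)*(t+x-1))^2) * hPs
  field_simp
  linear_combination key + (-4*(x-1)^2*(t+x-1)^2) * hy2x
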